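/- Let T be a tree on n vertices and let S ⊆ V(T) with |S| = k. Then the forest T − S has exactly |E_T(S)| − k + 1 connected components, and consequently f_T(S) := |E_T(S)| − 2k + 1 ≤ M_k(T) − k, with equality achieved for some S of size k. -/

import Mathlib

open Matrix

/-- The maximal disconnection of `G` by `k` vertices: the maximum number of
connected components of an induced subgraph of `G` on `n - k` vertices. -/
noncomputable def MD {n : ℕ} (G : SimpleGraph (Fin n)) (k : ℕ) : ℕ :=
  Finset.sup (Finset.univ.filter fun s : Finset (Fin n) => s.card = n - k)
    fun s => Nat.card (SimpleGraph.induce (↑s : Set (Fin n)) G).ConnectedComponent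

/-- The set of edges of `G` incident to at least one vertex of `S`. -/
def ETset {n : ℕ} (G : SimpleGraph (Fin n)) (S : Finset (Fin n)) : Set (Sym2 (Fin n)) :=
  {e ∈ G.edgeSet | ∃ v ∈ S, v ∈ e}

/-- f_G(S) = |E_G(S)| − 2|S| + 1. -/
noncomputable def fT {n : ℕ} (G : SimpleGraph (Fin n)) (S : Finset (Fin n)) : ℤ :=
  ((ETset G S).ncard : ℤ) - 2 * S.card + 1

open SimpleGraph in
private lemma lemC' {V : Type*} {G : SimpleGraph V} {v w a b : V} (p : G.Walk a b) :
    (G \ fromEdgeSet {s(v, w)}).Reachable a b ∨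
      ((G \ fromEdgeSet {s(v, w)}).Reachable a v ∧ (G \ fromEdgeSet {s(v, w)}).Reachable w b) ∨
      ((G \ fromEdgeSet {s(v, w)}).Reachable a w ∧ (G \ fromEdgeSet {s(v, w)}).Reachable v b) := by
  set G' := G \ fromEdgeSet {s(v, w)} with hG'
  induction p with
  | nil => exact Or.inl (Reachable.refl _)
  | @cons a x b h q ih =>
    by_cases he : s(a, x) = s(v, w)
    · rw [Sym2.eq_iff] at he
      rcases he with ⟨rfl, rfl⟩ | ⟨rfl, rfl⟩
      · rcases ih with h1 | ⟨h2, h3⟩ | ⟨h4, h5⟩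
        · exact Or.inr (Or.inl ⟨Reachable.refl _, h1⟩)
        · exact Or.inr (Or.inl ⟨Reachable.refl _, h3⟩)
        · exact Or.inl h5
      · rcases ih with h1 | ⟨h2, h3⟩ | ⟨h4, h5⟩
        · exact Or.inr (Or.inr ⟨Reachable.refl _, h1⟩)
        · exact Or.inl h3
        · exact Or.inr (Or.inr ⟨Reachable.refl _, h5⟩)
    · have hadj : G'.Adj a x := by
        rw [hG']
        simp only [sdiff_adj, fromEdgeSet_adj, Set.mem_singleton_iff]
        exact ⟨h, fun hc => he hc.1⟩
      have har : G'.Reachable a x := hadj.reachable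
      rcases ih with h1 | ⟨h2, h3⟩ | ⟨h4, h5⟩
      · exact Or.inl (har.trans h1)
      · exact Or.inr (Or.inl ⟨har.trans h2, h3⟩)
      · exact Or.inr (Or.inr ⟨har.trans h4, h5⟩)

open SimpleGraph in
private lemma lemB' {V : Type*} [Fintype V] {G : SimpleGraph V} {v w : V} (h : G.Adj v w)
    (hb : ¬ (G \ fromEdgeSet {s(v, w)}).Reachable v w) :
    Nat.card (G \ fromEdgeSet {s(v, w)}).ConnectedComponent
      = Nat.card G.ConnectedComponent + 1 := by
  classical
  set G' := G \ fromEdgeSet {s(v, w)} with hG'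
  have hle : G' ≤ G := sdiff_le
  set φ : G'.ConnectedComponent → G.ConnectedComponent :=
    ConnectedComponent.map (Hom.ofLE hle) with hφ
  have hφmk : ∀ a : V, φ (G'.connectedComponentMk a) = G.connectedComponentMk a := fun a => rfl
  letI : Fintype G.ConnectedComponent := Fintype.ofFinite _
  letI : Fintype G'.ConnectedComponent := Fintype.ofFinite _
  have key : ∀ c : G.ConnectedComponent,
      Nat.card {c' // φ c' = c} = if c = G.connectedComponentMk v then 2 else 1 := by
    intro c
    obtain ⟨u, rfl⟩ := c.exists_rep
    have hq : Quot.mk G.Reachable u = G.connectedComponentMk u := rfl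
    rw [hq]
    by_cases hc : G.connectedComponentMk u = G.connectedComponentMk v
    · rw [if_pos hc, Nat.card_eq_two_iff]
      have hvw : G'.connectedComponentMk v ≠ G'.connectedComponentMk w := by
        intro hcc
        exact hb (ConnectedComponent.exact hcc)
      have hrv : G.Reachable u v := ConnectedComponent.exact hc
      refine ⟨⟨G'.connectedComponentMk v, ?_⟩, ⟨G'.connectedComponentMk w, ?_⟩, ?_, ?_⟩
      · rw [hφmk]; exact hc.symm
      · rw [hφmk, ConnectedComponent.eq]
        exact (hrv.trans h.reachable).symm
      · simp only [ne_eq, Subtype.mk.injEq]; exact hvw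
      · rw [Set.eq_univ_iff_forall]
        rintro ⟨c', hc'⟩
        obtain ⟨a, rfl⟩ := c'.exists_rep
        have har : G.Reachable a u := ConnectedComponent.exact hc'
        obtain ⟨p⟩ := har.trans hrv
        rcases lemC' (v := v) (w := w) p with h1 | ⟨h2, h3⟩ | ⟨h4, h5⟩
        · exact Or.inl (Subtype.ext (ConnectedComponent.sound h1))
        · exact Or.inl (Subtype.ext (ConnectedComponent.sound h2))
        · exact Or.inr (Subtype.ext (ConnectedComponent.sound h4))
    · rw [if_neg hc, Nat.card_eq_one_iff_exists]
      refine ⟨⟨G'.connectedComponentMk u, (hφmk u)⟩, ?_⟩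
      rintro ⟨c', hc'⟩
      obtain ⟨a, rfl⟩ := c'.exists_rep
      have har : G.Reachable a u := ConnectedComponent.exact hc'
      obtain ⟨p⟩ := har
      rcases lemC' (v := v) (w := w) p with h1 | ⟨h2, h3⟩ | ⟨h4, h5⟩
      · exact Subtype.ext (ConnectedComponent.sound h1)
      · exact absurd (ConnectedComponent.sound (h.reachable.trans (h3.mono hle)).symm) hc
      · exact absurd (ConnectedComponent.sound (h5.mono hle).symm) hc
  rw [Nat.card_eq_fintype_card (α := G'.ConnectedComponent),
    Nat.card_eq_fintype_card (α := G.ConnectedComponent)]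
  calc Fintype.card G'.ConnectedComponent
      = Fintype.card (Σ c : G.ConnectedComponent, {c' // φ c' = c}) :=
        Fintype.card_congr (Equiv.sigmaFiberEquiv φ).symm
    _ = ∑ c : G.ConnectedComponent, Fintype.card {c' // φ c' = c} := Fintype.card_sigma
    _ = ∑ c : G.ConnectedComponent, (if c = G.connectedComponentMk v then 2 else 1) := by
        simp_rw [← Nat.card_eq_fintype_card, key]
    _ = Fintype.card G.ConnectedComponent + 1 := by
        have : ∀ c : G.ConnectedComponent,
            (if c = G.connectedComponentMk v then 2 else 1)
              = (if c = G.connectedComponentMk v then 1 else 0) + 1 := by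
          intro c; split <;> rfl
        simp_rw [this, Finset.sum_add_distrib, Finset.sum_ite_eq' Finset.univ
          (G.connectedComponentMk v) (fun _ => 1), Finset.sum_const, smul_eq_mul, mul_one,
          Finset.card_univ, if_pos (Finset.mem_univ _)]
        omega

open SimpleGraph in
private lemma lemA' {V : Type*} [Fintype V] : ∀ (m : ℕ) (G : SimpleGraph V),
    G.edgeSet.ncard = m → G.IsAcyclic →
    Fintype.card V = Nat.card G.ConnectedComponent + G.edgeSet.ncard := by
  intro m
  induction m with
  | zero =>
    intro G hm _
    have hE : G.edgeSet = ∅ := ((Set.ncard_eq_zero (Set.toFinite _)).mp hm)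
    have hbot : G = ⊥ := edgeSet_eq_empty.mp hE
    subst hbot
    rw [hm, add_zero]
    have : Function.Bijective ((⊥ : SimpleGraph V).connectedComponentMk) := by
      constructor
      · intro a b hab
        have := ConnectedComponent.exact hab
        obtain ⟨p⟩ := this
        cases p with
        | nil => rfl
        | cons h _ => exact absurd h (by simp)
      · exact fun c => c.exists_rep
    rw [← Nat.card_eq_fintype_card (α := V)]
    exact (Nat.card_eq_of_bijective _ this)
  | succ m ih =>
    intro G hm hac
    have hne : G.edgeSet.Nonempty := by
      rw [← Set.ncard_pos (Set.toFinite _), hm]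
      omega
    obtain ⟨e, he⟩ := hne
    induction e with
    | h v w =>
      have hadj : G.Adj v w := he
      set G' := G \ fromEdgeSet {s(v, w)} with hG'
      have hE' : G'.edgeSet = G.edgeSet \ {s(v, w)} := by
        rw [hG', edgeSet_sdiff, edgeSet_fromEdgeSet, edgeSet_sdiff_sdiff_isDiag]
      have hcard' : G'.edgeSet.ncard = m := by
        rw [hE', Set.ncard_diff_singleton_of_mem he, hm]
        omega
      have hle : G' ≤ G := sdiff_le
      have hac' : G'.IsAcyclic := fun u c hc =>
        hac (c.mapLe hle) ((Walk.mapLe_isCycle hle).mpr hc)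
      have hbridge : G.IsBridge s(v, w) :=
        (isAcyclic_iff_forall_adj_isBridge.mp hac) hadj
      have hb : ¬ G'.Reachable v w := fun hr => hbridge hr
      have := ih G' hcard' hac'
      rw [this, lemB' hadj hb, hcard', hm]
      ring

open SimpleGraph in
private lemma lemD' {n : ℕ} (T : SimpleGraph (Fin n)) (S : Finset (Fin n)) :
    (ETset T S).ncard
      + (SimpleGraph.induce (↑(Sᶜ) : Set (Fin n)) T).edgeSet.ncard = T.edgeSet.ncard := by
  classical
  have hsub : ETset T S ⊆ T.edgeSet := fun e he => he.1
  have himg : Sym2.map (Subtype.val : (↑(Sᶜ) : Set (Fin n)) → Fin n) ''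
      (SimpleGraph.induce (↑(Sᶜ) : Set (Fin n)) T).edgeSet = T.edgeSet \ ETset T S := by
    ext e
    constructor
    · rintro ⟨e', he', rfl⟩
      induction e' with
      | h a b =>
        have hadj : T.Adj a.val b.val := he'
        have ha : (a.val : Fin n) ∉ S := by
          have := a.property; simpa using this
        have hb : (b.val : Fin n) ∉ S := by
          have := b.property; simpa using this
        refine ⟨hadj, ?_⟩
        rintro ⟨-, v, hv, hve⟩
        rw [Sym2.map_pair_eq, Sym2.mem_iff] at hve
        rcases hve with rfl | rfl
        · exact ha hv
        · exact hb hv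
    · intro ⟨he, hnA⟩
      induction e with
      | h a b =>
        have hadj : T.Adj a b := he
        have ha : a ∉ S := fun h => hnA ⟨he, a, h, Sym2.mem_mk_left a b⟩
        have hb : b ∉ S := fun h => hnA ⟨he, b, h, Sym2.mem_mk_right a b⟩
        refine ⟨s(⟨a, by simpa using ha⟩, ⟨b, by simpa using hb⟩), hadj, rfl⟩
  have hinj : Function.Injective
      (Sym2.map (Subtype.val : (↑(Sᶜ) : Set (Fin n)) → Fin n)) :=
    Sym2.map.injective Subtype.val_injective
  have hcard : (SimpleGraph.induce (↑(Sᶜ) : Set (Fin n)) T).edgeSet.ncard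
      = (T.edgeSet \ ETset T S).ncard := by
    rw [← himg, Set.ncard_image_of_injective _ hinj]
  rw [hcard, add_comm, Set.ncard_diff_add_ncard_of_subset hsub (Set.toFinite _)]

/-- For a tree T and S ⊆ V(T) with |S| = k, the forest T − S has exactly
|E_T(S)| − k + 1 components; hence f_T(S) ≤ M_k(T) − k, with equality for
some S of size k. -/
theorem stmt12 {n k : ℕ} (T : SimpleGraph (Fin n)) (hT : T.IsTree) (hk : k ≤ n) :
    (∀ S : Finset (Fin n), S.card = k →
        (Nat.card (SimpleGraph.induce (↑(Sᶜ) : Set (Fin n)) T).ConnectedComponent : ℤ)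
            = ((ETset T S).ncard : ℤ) - k + 1 ∧
          fT T S ≤ (MD T k : ℤ) - k) ∧
      ∃ S : Finset (Fin n), S.card = k ∧ fT T S = (MD T k : ℤ) - k := by
  classical
  have hEtot : T.edgeSet.ncard + 1 = n := by
    have h1 := hT.card_edgeFinset
    rw [Fintype.card_fin] at h1
    have h2 : T.edgeSet.ncard = T.edgeFinset.card := by
      rw [Set.ncard_eq_toFinset_card' T.edgeSet, Set.toFinset_card]
      exact (SimpleGraph.edgeFinset_card (G := T)).symm
    omega
  -- key component-count formula
  have key : ∀ S : Finset (Fin n), S.card = k →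
      (Nat.card (SimpleGraph.induce (↑(Sᶜ) : Set (Fin n)) T).ConnectedComponent : ℤ)
        = ((ETset T S).ncard : ℤ) - k + 1 := by
    intro S hS
    have hac : (SimpleGraph.induce (↑(Sᶜ) : Set (Fin n)) T).IsAcyclic := by
      intro u c hc
      let hom : SimpleGraph.induce (↑(Sᶜ) : Set (Fin n)) T →g T :=
        ⟨Subtype.val, fun {a b} h => h⟩
      have hinj : Function.Injective ⇑hom := Subtype.val_injective
      exact hT.IsAcyclic (c.map hom)
        ((SimpleGraph.Walk.map_isCycle_iff_of_injective hinj).mpr hc)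
    have hA := lemA' _ (SimpleGraph.induce (↑(Sᶜ) : Set (Fin n)) T) rfl hac
    have hcardV : Fintype.card (↑(Sᶜ) : Set (Fin n)) + k = n := by
      have : Fintype.card (↑(Sᶜ) : Set (Fin n)) = (Sᶜ).card := by
        rw [← Set.toFinset_card, Finset.toFinset_coe]
      rw [this, Finset.card_compl, hS, Fintype.card_fin]
      omega
    have hD := lemD' T S
    -- arithmetic
    omega
  refine ⟨fun S hS => ⟨key S hS, ?_⟩, ?_⟩
  · have hmem : Sᶜ ∈ Finset.univ.filter (fun s : Finset (Fin n) => s.card = n - k) := by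
      rw [Finset.mem_filter]
      refine ⟨Finset.mem_univ _, ?_⟩
      rw [Finset.card_compl, hS, Fintype.card_fin]
    have hle : Nat.card (SimpleGraph.induce (↑(Sᶜ) : Set (Fin n)) T).ConnectedComponent
        ≤ MD T k :=
      Finset.le_sup (f := fun s : Finset (Fin n) =>
        Nat.card (SimpleGraph.induce (↑s : Set (Fin n)) T).ConnectedComponent) hmem
    have hkey := key S hS
    rw [fT, hS]
    omega
  · have hnon : (Finset.univ.filter (fun s : Finset (Fin n) => s.card = n - k)).Nonempty := by
      obtain ⟨t, -, ht⟩ := Finset.exists_subset_card_eq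
        (show n - k ≤ (Finset.univ : Finset (Fin n)).card by
          rw [Finset.card_univ, Fintype.card_fin]; omega)
      exact ⟨t, by rw [Finset.mem_filter]; exact ⟨Finset.mem_univ _, ht⟩⟩
    obtain ⟨s0, hs0mem, hMD⟩ := Finset.exists_mem_eq_sup _ hnon
      (fun s : Finset (Fin n) =>
        Nat.card (SimpleGraph.induce (↑s : Set (Fin n)) T).ConnectedComponent)
    rw [Finset.mem_filter] at hs0mem
    have hs0card : s0.card = n - k := hs0mem.2
    refine ⟨s0ᶜ, ?_, ?_⟩
    · rw [Finset.card_compl, hs0card, Fintype.card_fin]; omega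
    · have hScard : (s0ᶜ).card = k := by
        rw [Finset.card_compl, hs0card, Fintype.card_fin]; omega
      have hkey := key s0ᶜ hScard
      rw [compl_compl] at hkey
      have hMD' : MD T k = Nat.card (SimpleGraph.induce (↑s0 : Set (Fin n)) T).ConnectedComponent :=
        hMD
      rw [fT, hScard, hMD']
      omega
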